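/- arXiv:2301.06446 — 3 statements merged into one kernel-verified Lean document; each statement's English description precedes it below -/
import Mathlib

section
/- Let m ≡ 1 (mod 6) with m ≥ 7, n = 2^m − 1, and v = 2^{(m+1)/2} − 1. Then gcd(v, n) = 1, and for every integer a with 1 ≤ a ≤ 2^{(m−1)/2} + 2, the binary weight of (a·v mod n) is congruent to 1 modulo 3. -/
def w2 (x : ℕ) : ℕ := (Nat.digits 2 x).sum

lemma w2_zero : w2 0 = 0 := by simp [w2]

lemma w2_bit (y b : ℕ) (hb : b < 2) : w2 (2 * y + b) = b + w2 y := by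
  rcases Nat.eq_zero_or_pos (2 * y + b) with h | h
  · have hy : y = 0 := by omega
    have hb0 : b = 0 := by omega
    simp [hy, hb0, w2_zero]
  · unfold w2
    rw [Nat.digits_def' (by norm_num : 1 < 2) h]
    simp only [List.sum_cons]
    have h1 : (2 * y + b) % 2 = b := by omega
    have h2 : (2 * y + b) / 2 = y := by omega
    rw [h1, h2]

lemma w2_split (k : ℕ) : ∀ x r : ℕ, r < 2 ^ k → w2 (2 ^ k * x + r) = w2 x + w2 r := by
  induction k with
  | zero => intro x r hr; interval_cases r; simp [w2_zero]
  | succ k ih =>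
    intro x r hr
    have e : 2 ^ (k+1) * x + r = 2 * (2 ^ k * x + r / 2) + r % 2 := by
      have : r = 2 * (r / 2) + r % 2 := by omega
      ring_nf
      omega
    rw [e, w2_bit _ _ (Nat.mod_lt _ (by norm_num)),
      ih x (r / 2) (by omega)]
    have : w2 r = r % 2 + w2 (r / 2) := by
      rw [← w2_bit (r / 2) (r % 2) (Nat.mod_lt _ (by norm_num))]
      congr 1; omega
    omega

lemma w2_compl (k : ℕ) : ∀ s : ℕ, s < 2 ^ k → w2 s + w2 (2 ^ k - 1 - s) = k := by
  induction k with
  | zero => intro s hs; interval_cases s; simp [w2_zero]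
  | succ k ih =>
    intro s hs
    have h2k : 2 ^ (k+1) = 2 * 2 ^ k := by ring
    have hq : s / 2 < 2 ^ k := by omega
    have e : 2 ^ (k+1) - 1 - s = 2 * (2 ^ k - 1 - s / 2) + (1 - s % 2) := by omega
    have es : s = 2 * (s / 2) + s % 2 := by omega
    have hws : w2 s = s % 2 + w2 (s / 2) := by
      conv_lhs => rw [es]
      rw [w2_bit _ _ (by omega)]
    rw [e, w2_bit _ _ (by omega), hws]
    have := ih (s / 2) hq
    omega

lemma w2_one : w2 1 = 1 := by simp [w2]

lemma w2_pow (k : ℕ) : w2 (2 ^ k) = 1 := by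
  have := w2_split k 1 0 (by positivity)
  simpa [w2_zero, w2_one] using this

lemma w2_pow_sub_one (k : ℕ) : w2 (2 ^ k - 1) = k := by
  have := w2_compl k 0 (by positivity)
  simpa [w2_zero] using this

theorem stmt4 (m : ℕ) (hm : m % 6 = 1) (hm7 : 7 ≤ m)
    (n v : ℕ) (hn : n = 2 ^ m - 1) (hv : v = 2 ^ ((m + 1) / 2) - 1) :
    Nat.gcd v n = 1 ∧
    ∀ a : ℕ, 1 ≤ a → a ≤ 2 ^ ((m - 1) / 2) + 2 → w2 (a * v % n) % 3 = 1 := by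
  set k := (m + 1) / 2 with hk
  have hk4 : 4 ≤ k := by omega
  have hk3 : k % 3 = 1 := by omega
  set p := 2 ^ (k - 1) with hp
  have hp8 : 8 ≤ p := by
    calc (8:ℕ) = 2 ^ 3 := by norm_num
    _ ≤ 2 ^ (k - 1) := Nat.pow_le_pow_right (by norm_num) (by omega)
  have ht : 2 ^ k = 2 * p := by
    rw [hp, ← pow_succ']; congr 1; omega
  have hP : p ≤ p * p := Nat.le_mul_of_pos_left p (by omega)
  have hn'' : n = 2 * (p * p) - 1 := by
    rw [hn, show m = (k-1)+k from by omega, pow_add, ← hp, ht]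
    congr 1; ring
  have hv' : v = 2 * p - 1 := by rw [hv, ht]
  constructor
  · have hd1 : Nat.gcd v n ∣ 2 * p - 1 := hv' ▸ Nat.gcd_dvd_left v n
    have hd2 : Nat.gcd v n ∣ n := Nat.gcd_dvd_right v n
    have h3 : Nat.gcd v n ∣ (2 * p - 1) * p := hd1.mul_right p
    have hx : (2 * p - 1) * p + p = 2 * (p * p) := by
      rw [← Nat.succ_mul, show Nat.succ (2*p-1) = 2*p from by omega]; ring
    have e1 : n - (2 * p - 1) * p = p - 1 := by omega
    have h4 : Nat.gcd v n ∣ p - 1 := e1 ▸ Nat.dvd_sub hd2 h3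
    have h5 : Nat.gcd v n ∣ 2 * (p - 1) := h4.mul_left 2
    have e2 : (2 * p - 1) - 2 * (p - 1) = 1 := by omega
    exact Nat.dvd_one.mp (e2 ▸ Nat.dvd_sub hd1 h5)
  · intro a ha1 ha2
    rw [show (m - 1) / 2 = k - 1 from by omega, ← hp] at ha2
    by_cases hA : a ≤ p
    · -- main case
      obtain ⟨b, rfl⟩ : ∃ b, a = b + 1 := ⟨a - 1, by omega⟩
      have h1 : (b+1) * (2*p-1) + (b+1) = (b+1) * (2*p) := by
        rw [← Nat.mul_succ, show Nat.succ (2*p-1) = 2*p from by omega]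
      have h2 : (b+1) * (2*p) = 2*p*b + 2*p := by ring
      have key : (b+1) * v = 2 ^ k * b + (2 ^ k - 1 - b) := by
        rw [hv', ht]; omega
      have hmul2 : p * (2*p-1) + p = 2 * (p*p) := by
        rw [← Nat.mul_succ, show Nat.succ (2*p-1) = 2*p from by omega]; ring
      have hle : (b+1) * (2*p-1) ≤ p * (2*p-1) := Nat.mul_le_mul_right _ hA
      have hlt : (b+1) * v < n := by rw [hv']; omega
      rw [Nat.mod_eq_of_lt hlt, key,
        w2_split k b (2 ^ k - 1 - b) (by omega)]
      have := w2_compl k b (by omega)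
      omega
    · have hB : a = p + 1 ∨ a = p + 2 := by omega
      rcases hB with rfl | rfl
      · have h1 : (p+1) * (2*p-1) + (p+1) = (p+1) * (2*p) := by
          rw [← Nat.mul_succ, show Nat.succ (2*p-1) = 2*p from by omega]
        have h2 : (p+1) * (2*p) = 2*(p*p) + 2*p := by ring
        have key : (p+1) * v = n + p := by rw [hv']; omega
        have hplt : p < n := by omega
        rw [key, Nat.add_mod_left, Nat.mod_eq_of_lt hplt, hp, w2_pow]
      · have h1 : (p+2) * (2*p-1) + (p+2) = (p+2) * (2*p) := by
          rw [← Nat.mul_succ, show Nat.succ (2*p-1) = 2*p from by omega]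
        have h2 : (p+2) * (2*p) = 2*(p*p) + 4*p := by ring
        have h2p : 2 * p ≤ p * p := Nat.mul_le_mul_right p (by omega)
        have key : (p+2) * v = n + (2 ^ k * 1 + (p - 1)) := by
          rw [hv', ht]; omega
        have hrlt : 2 ^ k * 1 + (p - 1) < n := by omega
        rw [key, Nat.add_mod_left, Nat.mod_eq_of_lt hrlt,
          w2_split k 1 (p - 1) (by omega), w2_one, hp, w2_pow_sub_one]
        omega
end

section
/- Let m ≡ 3 (mod 6) with m ≥ 9, n = 2^m − 1, and v = 2^{(m−1)/2} − 1. Then gcd(v, n) = 1 and for every integer a with 1 ≤ a ≤ 2^{(m−1)/2}, the binary weight of a·v is congruent to 1 modulo 3. -/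
lemma digits_len_le_of_lt_pow {k x : ℕ} (hx : x < 2 ^ k) :
    (Nat.digits 2 x).length ≤ k := by
  rcases Nat.eq_zero_or_pos x with rfl | hx0
  · simp
  · have h1 : 2 ^ (Nat.digits 2 x).length ≤ 2 * x :=
      Nat.base_pow_length_digits_le 2 x one_lt_two hx0.ne'
    have h2 : 2 * x < 2 ^ (k + 1) := by
      rw [pow_succ, mul_comm]; omega
    have := lt_of_le_of_lt h1 h2
    have := (Nat.pow_lt_pow_iff_right (a := 2) one_lt_two).mp this
    omega

lemma w2_add_pow_mul (k x y : ℕ) (hx : x < 2 ^ k) :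
    w2 (x + 2 ^ k * y) = w2 x + w2 y := by
  rcases Nat.eq_zero_or_pos y with rfl | hy
  · simp [w2]
  · have hlen : (Nat.digits 2 x).length ≤ k := digits_len_le_of_lt_pow hx
    have hk : (Nat.digits 2 x).length + (k - (Nat.digits 2 x).length) = k := by omega
    have := Nat.digits_append_zeroes_append_digits
      (b := 2) (k := k - (Nat.digits 2 x).length) (m := y) (n := x) one_lt_two hy
    rw [hk] at this
    unfold w2
    rw [← this]
    simp [List.sum_append, List.sum_replicate]

lemma w2_complement (k : ℕ) : ∀ x, x < 2 ^ k → w2 x + w2 (2 ^ k - 1 - x) = k := by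
  induction k with
  | zero => intro x hx; interval_cases x; simp [w2]
  | succ k ih =>
    intro x hx
    have hxd : x % 2 + 2 * (x / 2) = x := Nat.mod_add_div x 2
    have hx2 : x / 2 < 2 ^ k := by
      have : x < 2 * 2 ^ k := by rw [← pow_succ']; exact hx
      omega
    have hcompl : 2 ^ (k + 1) - 1 - x = (1 - x % 2) + 2 * (2 ^ k - 1 - x / 2) := by
      have h1 : 2 ^ (k + 1) = 2 * 2 ^ k := by ring
      have h2 : (1 : ℕ) ≤ 2 ^ k := Nat.one_le_two_pow
      omega
    have e1 : w2 x = w2 (x % 2) + w2 (x / 2) := by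
      have := w2_add_pow_mul 1 (x % 2) (x / 2) (by omega)
      simpa [hxd] using this
    have e2 : w2 (2 ^ (k + 1) - 1 - x) = w2 (1 - x % 2) + w2 (2 ^ k - 1 - x / 2) := by
      have := w2_add_pow_mul 1 (1 - x % 2) (2 ^ k - 1 - x / 2) (by omega)
      rw [hcompl]
      simpa using this
    have e3 : w2 (x % 2) + w2 (1 - x % 2) = 1 := by
      rcases Nat.mod_two_eq_zero_or_one x with h | h <;> simp [h, w2]
    have := ih (x / 2) hx2
    omega

lemma w2_mul_mersenne (k a : ℕ) (ha1 : 1 ≤ a) (ha2 : a ≤ 2 ^ k) :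
    w2 (a * (2 ^ k - 1)) = k := by
  have key : a * (2 ^ k - 1) = (2 ^ k - a) + 2 ^ k * (a - 1) := by
    have h2 : (1 : ℕ) ≤ 2 ^ k := Nat.one_le_two_pow
    rcases Nat.exists_eq_add_of_le ha1 with ⟨b, rfl⟩
    rcases Nat.exists_eq_add_of_le ha2 with ⟨c, hc⟩
    have e1 : 2 ^ k - 1 = b + c := by omega
    have e2 : 2 ^ k - (1 + b) = c := by omega
    have e3 : 1 + b - 1 = b := by omega
    rw [e1, e2, e3, hc]; ring
  rw [key, w2_add_pow_mul k _ _ (by have : (1:ℕ) ≤ 2 ^ k := Nat.one_le_two_pow; omega)]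
  have hcompl := w2_complement k (a - 1) (by omega)
  have : 2 ^ k - 1 - (a - 1) = 2 ^ k - a := by omega
  rw [this] at hcompl
  omega

theorem stmt6 (m : ℕ) (hm : m % 6 = 3) (hm9 : 9 ≤ m)
    (n v : ℕ) (hn : n = 2 ^ m - 1) (hv : v = 2 ^ ((m - 1) / 2) - 1) :
    Nat.gcd v n = 1 ∧
    ∀ a : ℕ, 1 ≤ a → a ≤ 2 ^ ((m - 1) / 2) → w2 (a * v) % 3 = 1 := by
  set k := (m - 1) / 2 with hk
  have hkm : 2 * k + 1 = m := by omega
  have hk3 : k % 3 = 1 := by omega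
  constructor
  · -- coprimality
    set d := Nat.gcd v n with hd
    have hdv : d ∣ v := Nat.gcd_dvd_left _ _
    have hdn : d ∣ n := Nat.gcd_dvd_right _ _
    have h1 : (2 : ZMod d) ^ k = 1 := by
      have : ((v : ℕ) : ZMod d) = 0 := (ZMod.natCast_eq_zero_iff _ _).mpr hdv
      have hv' : (v : ℕ) + 1 = 2 ^ k := by
        have : (1:ℕ) ≤ 2 ^ k := Nat.one_le_two_pow
        omega
      calc (2 : ZMod d) ^ k = ((2 ^ k : ℕ) : ZMod d) := by push_cast; ring
        _ = ((v + 1 : ℕ) : ZMod d) := by rw [hv']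
        _ = 1 := by push_cast [this]; ring
    have h2 : (2 : ZMod d) ^ m = 1 := by
      have : ((n : ℕ) : ZMod d) = 0 := (ZMod.natCast_eq_zero_iff _ _).mpr hdn
      have hn' : (n : ℕ) + 1 = 2 ^ m := by
        have : (1:ℕ) ≤ 2 ^ m := Nat.one_le_two_pow
        omega
      calc (2 : ZMod d) ^ m = ((2 ^ m : ℕ) : ZMod d) := by push_cast; ring
        _ = ((n + 1 : ℕ) : ZMod d) := by rw [hn']
        _ = 1 := by push_cast [this]; ring
    have hgcd : Nat.gcd k m = 1 := by
      have h1 : Nat.gcd k m ∣ k := Nat.gcd_dvd_left _ _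
      have h2 : Nat.gcd k m ∣ m := Nat.gcd_dvd_right _ _
      have h3 : Nat.gcd k m ∣ 2 * k := Dvd.dvd.mul_left h1 2
      have h4 : Nat.gcd k m ∣ m - 2 * k := Nat.dvd_sub h2 h3
      have : m - 2 * k = 1 := by omega
      rw [this] at h4; exact Nat.dvd_one.mp h4
    have h3 : (2 : ZMod d) = 1 := by
      have := (pow_gcd_eq_one (a := (2 : ZMod d))).mpr ⟨h1, h2⟩
      rwa [hgcd, pow_one] at this
    have h4 : ((1 : ℕ) : ZMod d) = 0 := by
      have : (2 : ZMod d) - 1 = 0 := by rw [h3]; ring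
      have h5 : ((1 : ℕ) : ZMod d) = (2 : ZMod d) - 1 := by push_cast; ring
      rw [h5, this]
    exact Nat.dvd_one.mp ((ZMod.natCast_eq_zero_iff 1 d).mp h4)
  · intro a ha1 ha2
    rw [hv, w2_mul_mersenne k a ha1 ha2, hk3]
end

section
/- Let m ≥ 2, n = 2^m − 1, let v be odd with 1 ≤ v ≤ 2^{(m−1)/2} − 1 (m odd), and let w = 2^{(m−1)/2} − 1. Then the binary weight of v·w equals (m−1)/2. -/
lemma w2_rec (n : ℕ) : w2 n = n % 2 + w2 (n / 2) := by
  rcases Nat.eq_zero_or_pos n with h | h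
  · simp [h, w2]
  · unfold w2
    rw [Nat.digits_def' (by norm_num) h]
    simp

lemma lemA : ∀ k a b : ℕ, b < 2 ^ k → w2 (a * 2 ^ k + b) = w2 a + w2 b := by
  intro k
  induction k with
  | zero => intro a b hb; interval_cases b; simp [w2]
  | succ k ih =>
    intro a b hb
    have h2 : (0:ℕ) < 2 ^ k := Nat.pow_pos (by norm_num)
    rw [w2_rec (a * 2 ^ (k+1) + b), w2_rec b]
    have he : a * 2 ^ (k+1) = (a * 2 ^ k) * 2 := by ring
    have hmod : (a * 2 ^ (k+1) + b) % 2 = b % 2 := by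
      rw [he]; omega
    have hdiv : (a * 2 ^ (k+1) + b) / 2 = a * 2 ^ k + b / 2 := by
      rw [he]; omega
    rw [hmod, hdiv, ih a (b / 2) (by omega)]
    ring

lemma lemB : ∀ k a : ℕ, a < 2 ^ k → w2 a + w2 (2 ^ k - 1 - a) = k := by
  intro k
  induction k with
  | zero => intro a ha; interval_cases a; simp [w2]
  | succ k ih =>
    intro a ha
    have h2 : (0:ℕ) < 2 ^ k := Nat.pow_pos (by norm_num)
    have hq : a / 2 < 2 ^ k := by rw [pow_succ] at ha; omega
    rw [w2_rec a, w2_rec (2 ^ (k+1) - 1 - a)]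
    have hmod : (2 ^ (k+1) - 1 - a) % 2 = 1 - a % 2 := by
      rw [pow_succ]; omega
    have hdiv : (2 ^ (k+1) - 1 - a) / 2 = 2 ^ k - 1 - a / 2 := by
      rw [pow_succ]; omega
    rw [hmod, hdiv]
    have := ih (a / 2) hq
    omega

theorem stmt19 (m : ℕ) (hm3 : 3 ≤ m) (hmodd : Odd m)
    (n v w : ℕ) (hn : n = 2 ^ m - 1) (hvodd : Odd v)
    (hv1 : 1 ≤ v) (hv2 : v ≤ 2 ^ ((m - 1) / 2) - 1)
    (hw : w = 2 ^ ((m - 1) / 2) - 1) :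
    w2 (v * w) = (m - 1) / 2 := by
  set k := (m - 1) / 2 with hk
  have h2 : (0:ℕ) < 2 ^ k := Nat.pow_pos (by norm_num)
  have hvk : v < 2 ^ k := by omega
  have hP : 2 ^ k ≤ v * 2 ^ k := Nat.le_mul_of_pos_left _ hv1
  have hP2 : v ≤ v * 2 ^ k := Nat.le_mul_of_pos_right _ h2
  have e1 : v * w = v * 2 ^ k - v := by rw [hw, Nat.mul_sub, mul_one]
  have e2 : (v - 1) * 2 ^ k = v * 2 ^ k - 2 ^ k := by rw [Nat.sub_mul, one_mul]
  have key : v * w = (v - 1) * 2 ^ k + (2 ^ k - v) := by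
    rw [e1, e2]; omega
  rw [key, lemA k (v - 1) (2 ^ k - v) (by omega)]
  have : 2 ^ k - v = 2 ^ k - 1 - (v - 1) := by omega
  rw [this]
  exact lemB k (v - 1) (by omega)
end
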